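/- Let WN = (P,T,F,i,o) be a sound acyclic free-choice workflow net (AFW-net). For all distinct nodes x, y ∈ P ∪ T: if (x,y) ∈ ∥, then there is no acyclic path from x to y and no acyclic path from y to x. -/

import Mathlib

/-- A Petri net: finite disjoint sets of places and transitions and a flow relation
`F ⊆ (P × T) ∪ (T × P)`. -/
structure PetriNet (α : Type) [DecidableEq α] where
  places : Finset α
  transitions : Finset α
  flow : Finset (α × α)
  disjoint_pt : Disjoint places transitions
  flow_mem : ∀ e ∈ flow,
    (e.1 ∈ places ∧ e.2 ∈ transitions) ∨ (e.1 ∈ transitions ∧ e.2 ∈ places)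

namespace PetriNet

variable {α : Type} [DecidableEq α]

/-- All nodes `P ∪ T` of the net. -/
def nodes (N : PetriNet α) : Finset α := N.places ∪ N.transitions

/-- The preset `•x` of a node. -/
def preset (N : PetriNet α) (x : α) : Finset α :=
  N.nodes.filter (fun p => (p, x) ∈ N.flow)

/-- The postset `x•` of a node. -/
def postset (N : PetriNet α) (x : α) : Finset α :=
  N.nodes.filter (fun s => (x, s) ∈ N.flow)

/-- A path: a nonempty sequence of nodes, each consecutive pair related by the flow. -/
def IsPath (N : PetriNet α) (w : List α) : Prop :=
  w ≠ [] ∧ (∀ x ∈ w, x ∈ N.nodes) ∧ w.Chain' (fun a b => (a, b) ∈ N.flow)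

/-- An acyclic path: a path whose nodes are pairwise distinct. -/
def IsAcyclicPath (N : PetriNet α) (w : List α) : Prop :=
  N.IsPath w ∧ w.Nodup

/-- There is an acyclic path from `x` to `y`. -/
def HasAcyclicPath (N : PetriNet α) (x y : α) : Prop :=
  ∃ w, N.IsAcyclicPath w ∧ w.head? = some x ∧ w.getLast? = some y

/-- `HasPath(x)`: the set of all nodes to which `x` has an acyclic path
(including `x` itself, via the trivial path `(x)` when `x` is a node). -/
def HasPathSet (N : PetriNet α) (x : α) : Set α := {y | N.HasAcyclicPath x y}

/-- A net is acyclic iff no node has a nontrivial path to itself. -/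
def Acyclic (N : PetriNet α) : Prop :=
  ∀ x, ¬ ∃ w, N.IsPath w ∧ 2 ≤ w.length ∧ w.head? = some x ∧ w.getLast? = some x

/-- A transition `t` is enabled in marking `M` iff all its input places carry a token. -/
def Enabled (N : PetriNet α) (M : α → ℕ) (t : α) : Prop :=
  t ∈ N.transitions ∧ ∀ p ∈ N.preset t, 1 ≤ M p

/-- Firing `t` consumes one token from each input place and produces one on each output place. -/
def fire (N : PetriNet α) (M : α → ℕ) (t : α) : α → ℕ := fun p =>
  (M p - (if p ∈ N.preset t then 1 else 0)) + (if p ∈ N.postset t then 1 else 0)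

/-- A step `M —t→ M'`. -/
def Step (N : PetriNet α) (M : α → ℕ) (t : α) (M' : α → ℕ) : Prop :=
  N.Enabled M t ∧ M' = N.fire M t

/-- Reachability via finite occurrence sequences. -/
def Reachable (N : PetriNet α) : (α → ℕ) → (α → ℕ) → Prop :=
  Relation.ReflTransGen (fun M M' => ∃ t, N.Step M t M')

/-- Liveness with respect to an initial marking. -/
def Live (N : PetriNet α) (M₀ : α → ℕ) : Prop :=
  ∀ M, N.Reachable M₀ M → ∀ t ∈ N.transitions, ∃ M', N.Reachable M M' ∧ N.Enabled M' t

/-- Boundedness with respect to an initial marking. -/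
def Bounded (N : PetriNet α) (M₀ : α → ℕ) : Prop :=
  ∃ n : ℕ, ∀ M, N.Reachable M₀ M → ∀ p ∈ N.places, M p ≤ n

/-- Free-choice: every place with more than one output transition is the unique
input of each of those transitions. -/
def FreeChoice (N : PetriNet α) : Prop :=
  ∀ p ∈ N.places, 1 < (N.postset p).card → ∀ t ∈ N.postset p, N.preset t = {p}

/-- A node is active in `M` iff it is a place carrying a token or an enabled transition. -/
def Active (N : PetriNet α) (x : α) (M : α → ℕ) : Prop :=
  (x ∈ N.places ∧ 1 ≤ M x) ∨ (x ∈ N.transitions ∧ N.Enabled M x)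

/-- One unfolding of the defining clauses of the concurrency relation. -/
def concStep (N : PetriNet α) (M₀ : α → ℕ) (R : Set (α × α)) : Set (α × α) :=
  {q | q.1 ≠ q.2 ∧
    (∃ M, N.Reachable M₀ M ∧ N.Active q.1 M ∧ N.Active q.2 M) ∧
    (q.1 ∈ N.transitions → q.2 ∈ N.places → ∀ z ∈ N.preset q.1, (z, q.2) ∈ R) ∧
    (q.1 ∈ N.places → q.2 ∈ N.transitions → ∀ z ∈ N.preset q.2, (z, q.1) ∈ R) ∧
    (q.1 ∈ N.transitions → q.2 ∈ N.transitions →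
      ∀ z ∈ N.preset q.1, ∀ z' ∈ N.preset q.2, (z, z') ∈ R)}

/-- The concurrency relation `∥`: the greatest relation consistent with its
defining clauses (Def. of concurrency). -/
def Concurrent (N : PetriNet α) (M₀ : α → ℕ) : Set (α × α) :=
  ⋃₀ {R | R ⊆ N.concStep M₀ R}

/-- The number of places on `w` carrying at least one token in `M`. -/
def tokensOn (N : PetriNet α) (M : α → ℕ) (w : List α) : ℕ :=
  (w.toFinset.filter (fun p => p ∈ N.places ∧ 1 ≤ M p)).card

end PetriNet

/-- A workflow net: a Petri net with a source place `i` (`•i = ∅`), a sink place `o`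
(`o• = ∅`), and every node on a path from `i` to `o`. -/
structure WorkflowNet (α : Type) [DecidableEq α] extends PetriNet α where
  source : α
  sink : α
  source_mem : source ∈ places
  sink_mem : sink ∈ places
  source_no_pre : toPetriNet.preset source = ∅
  sink_no_post : toPetriNet.postset sink = ∅
  all_on_path : ∀ x ∈ toPetriNet.nodes, ∃ w, toPetriNet.IsPath w ∧
    w.head? = some source ∧ w.getLast? = some sink ∧ x ∈ w

namespace WorkflowNet

variable {α : Type} [DecidableEq α]

/-- The initial marking: one token on the source, none elsewhere. -/
def initialMarking (W : WorkflowNet α) : α → ℕ := fun p => if p = W.source then 1 else 0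

/-- The terminal marking: one token on the sink, none elsewhere. -/
def terminalMarking (W : WorkflowNet α) : α → ℕ := fun p => if p = W.sink then 1 else 0

/-- Soundness of a workflow net. -/
def Sound (W : WorkflowNet α) : Prop :=
  (∀ M, W.toPetriNet.Reachable W.initialMarking M →
    W.toPetriNet.Reachable M W.terminalMarking ∧ (1 ≤ M W.sink → M = W.terminalMarking)) ∧
  (∀ t ∈ W.transitions, ∃ M M', W.toPetriNet.Reachable W.initialMarking M ∧
    W.toPetriNet.Step M t M')

end WorkflowNet

section Aux

variable {α : Type} [DecidableEq α]

/- ### Basic list helpers -/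

lemma pn_head_eq {β : Type} {l : List β} {a : β} (h : l.head? = some a) :
    ∃ s, l = a :: s := by
  cases l with
  | nil => simp at h
  | cons x s =>
    have : x = a := by simpa using h
    exact ⟨s, by rw [this]⟩

lemma pn_last_eq {β : Type} {l : List β} {b : β} (h : l.getLast? = some b) :
    ∃ l', l = l' ++ [b] := by
  induction l with
  | nil => simp at h
  | cons a t ih =>
    cases t with
    | nil => simp at h; exact ⟨[], by simp [h]⟩
    | cons c t' =>
      rw [List.getLast?_cons_cons] at h
      obtain ⟨l', hl⟩ := ih h
      exact ⟨a :: l', by simp [hl]⟩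

lemma pn_head_append {β : Type} (l₁ l₂ : List β) (h : l₁ ≠ []) :
    (l₁ ++ l₂).head? = l₁.head? := by
  cases l₁ with
  | nil => exact absurd rfl h
  | cons a t => rfl

lemma pn_last_append {β : Type} (l₁ l₂ : List β) (h : l₂ ≠ []) :
    (l₁ ++ l₂).getLast? = l₂.getLast? := by
  obtain ⟨b, hl⟩ : ∃ b, l₂.getLast? = some b := by
    cases hx : l₂.getLast? with
    | none => exact absurd (List.getLast?_eq_none_iff.mp hx) h
    | some b => exact ⟨b, rfl⟩
  obtain ⟨l', rfl⟩ := pn_last_eq hl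
  rw [hl, ← List.append_assoc, List.getLast?_concat]

lemma pn_two_le_length {β : Type} {w : List β} {a b : β} (hh : w.head? = some a)
    (hl : w.getLast? = some b) (hne : a ≠ b) : 2 ≤ w.length := by
  cases w with
  | nil => simp at hh
  | cons x t =>
    cases t with
    | nil =>
      simp at hh hl
      exact absurd (hh.symm.trans hl) hne
    | cons c t' => simp

lemma pn_pred_of_chain {β : Type} {R : β → β → Prop} {x : β} :
    ∀ (l : List β) (s : β), (s :: l).Chain' R → x ∈ l → ∃ z, R z x := by
  intro l
  induction l with
  | nil => simp
  | cons b t ih =>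
    intro s hch hx
    rcases List.mem_cons.mp hx with rfl | hx'
    · exact ⟨s, (List.isChain_cons_cons.mp hch).1⟩
    · exact ih b (List.isChain_cons_cons.mp hch).2 hx'

lemma pn_succ_of_chain {β : Type} {R : β → β → Prop} {x e : β} :
    ∀ (l : List β), l.Chain' R → l.getLast? = some e → x ∈ l → x ≠ e → ∃ z, R x z := by
  intro l
  induction l with
  | nil => simp
  | cons b t ih =>
    intro hch hl hx hne
    cases t with
    | nil =>
      simp at hl hx
      exact absurd (hx.trans hl) hne
    | cons c t' =>
      rcases List.mem_cons.mp hx with rfl | hx'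
      · exact ⟨c, (List.isChain_cons_cons.mp hch).1⟩
      · exact ih (List.isChain_cons_cons.mp hch).2 (by simpa [List.getLast?_cons_cons] using hl)
          hx' hne

/- ### Basic PetriNet lemmas -/

namespace PetriNet

variable {N : PetriNet α}

lemma fst_mem_nodes {a b : α} (h : (a, b) ∈ N.flow) : a ∈ N.nodes := by
  rcases N.flow_mem _ h with ⟨h1, _⟩ | ⟨h1, _⟩ <;>
    simp [nodes, Finset.mem_union, h1]

lemma snd_mem_nodes {a b : α} (h : (a, b) ∈ N.flow) : b ∈ N.nodes := by
  rcases N.flow_mem _ h with ⟨_, h2⟩ | ⟨_, h2⟩ <;>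
    simp [nodes, Finset.mem_union, h2]

lemma mem_preset' {z x : α} (h : (z, x) ∈ N.flow) : z ∈ N.preset x := by
  simp [preset, Finset.mem_filter, fst_mem_nodes h, h]

lemma mem_postset' {x z : α} (h : (x, z) ∈ N.flow) : z ∈ N.postset x := by
  simp [postset, Finset.mem_filter, snd_mem_nodes h, h]

lemma flow_of_mem_preset {z x : α} (h : z ∈ N.preset x) : (z, x) ∈ N.flow :=
  (Finset.mem_filter.mp h).2

lemma flow_of_mem_postset {x z : α} (h : z ∈ N.postset x) : (x, z) ∈ N.flow :=
  (Finset.mem_filter.mp h).2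

lemma not_place_and_trans {a : α} (h1 : a ∈ N.places) (h2 : a ∈ N.transitions) : False :=
  Finset.disjoint_left.mp N.disjoint_pt h1 h2

lemma snd_trans {a b : α} (h : (a, b) ∈ N.flow) (ha : a ∈ N.places) : b ∈ N.transitions := by
  rcases N.flow_mem _ h with ⟨_, h2⟩ | ⟨h1, _⟩
  · exact h2
  · exact absurd (not_place_and_trans ha h1) not_false

lemma snd_place {a b : α} (h : (a, b) ∈ N.flow) (ha : a ∈ N.transitions) : b ∈ N.places := by
  rcases N.flow_mem _ h with ⟨h1, _⟩ | ⟨_, h2⟩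
  · exact absurd (not_place_and_trans h1 ha) not_false
  · exact h2

lemma fst_place {a b : α} (h : (a, b) ∈ N.flow) (hb : b ∈ N.transitions) : a ∈ N.places := by
  rcases N.flow_mem _ h with ⟨h1, _⟩ | ⟨_, h2⟩
  · exact h1
  · exact absurd (not_place_and_trans h2 hb) not_false

lemma fst_trans {a b : α} (h : (a, b) ∈ N.flow) (hb : b ∈ N.places) : a ∈ N.transitions := by
  rcases N.flow_mem _ h with ⟨_, h2⟩ | ⟨h1, _⟩
  · exact absurd (not_place_and_trans hb h2) not_false
  · exact h1

/- ### Acyclicity: every path is duplicate-free -/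

lemma cycle_of_dup :
    ∀ (w : List α), w.Chain' (fun a b => (a, b) ∈ N.flow) → (∀ x ∈ w, x ∈ N.nodes) →
      ¬ w.Nodup →
      ∃ c x, N.IsPath c ∧ 2 ≤ c.length ∧ c.head? = some x ∧ c.getLast? = some x := by
  intro w
  induction w with
  | nil => intro _ _ h; exact absurd List.nodup_nil h
  | cons a l ih =>
    intro hch hmem hnd
    by_cases ha : a ∈ l
    · obtain ⟨s, t, rfl⟩ := List.append_of_mem ha
      refine ⟨(a :: s) ++ [a], a, ⟨by simp, ?_, ?_⟩, by simp, by simp, List.getLast?_concat⟩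
      · intro x hx
        apply hmem
        simp at hx ⊢
        tauto
      · exact hch.prefix ⟨t, by simp⟩
    · have hnd' : ¬ l.Nodup := by
        intro h; exact hnd (List.nodup_cons.mpr ⟨ha, h⟩)
      exact ih (List.isChain_cons.mp hch).2 (fun x hx => hmem x (List.mem_cons_of_mem _ hx)) hnd'

lemma IsPath.nodup' (hacyc : N.Acyclic) {w : List α} (hw : N.IsPath w) : w.Nodup := by
  by_contra h
  obtain ⟨c, x, hc, hlen, h1, h2⟩ := cycle_of_dup w hw.2.2 hw.2.1 h
  exact hacyc x ⟨c, hc, hlen, h1, h2⟩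

/- ### Acyclic-path machinery -/

lemma hasPath_refl {p : α} (hp : p ∈ N.nodes) : N.HasAcyclicPath p p :=
  ⟨[p], ⟨⟨by simp, by simpa, List.isChain_singleton p⟩, List.nodup_singleton p⟩, rfl, rfl⟩

lemma path_concat {w1 w2 : List α} {a b c : α} (h1 : N.IsPath w1) (h2 : N.IsPath w2)
    (hh1 : w1.head? = some a) (hl1 : w1.getLast? = some b) (hh2 : w2.head? = some b)
    (hl2 : w2.getLast? = some c) :
    ∃ w, N.IsPath w ∧ w.head? = some a ∧ w.getLast? = some c ∧
      w.length + 1 = w1.length + w2.length := by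
  obtain ⟨t, rfl⟩ := pn_head_eq hh2
  cases t with
  | nil =>
    have hcb : b = c := by simpa using hl2
    exact ⟨w1, h1, hh1, hcb ▸ hl1, by simp⟩
  | cons d t' =>
    obtain ⟨s, rfl⟩ := pn_head_eq hh1
    refine ⟨(a :: s) ++ (d :: t'), ⟨by simp, ?_, ?_⟩, by rfl, ?_, by simp; omega⟩
    · intro x hx
      rcases List.mem_append.mp hx with hx' | hx'
      · exact h1.2.1 x hx'
      · exact h2.2.1 x (List.mem_cons_of_mem _ hx')
    · refine List.IsChain.append h1.2.2 (List.isChain_cons_cons.mp h2.2.2).2 ?_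
      intro x hx y hy
      rw [hl1] at hx
      simp at hx hy
      rw [← hx, ← hy]
      exact (List.isChain_cons_cons.mp h2.2.2).1
    · rw [pn_last_append _ _ (by simp)]
      simpa [List.getLast?_cons_cons] using hl2

lemma hasPath_trans (hacyc : N.Acyclic) {a b c : α}
    (h1 : N.HasAcyclicPath a b) (h2 : N.HasAcyclicPath b c) : N.HasAcyclicPath a c := by
  obtain ⟨w1, ⟨hp1, _⟩, hh1, hl1⟩ := h1
  obtain ⟨w2, ⟨hp2, _⟩, hh2, hl2⟩ := h2
  obtain ⟨w, hp, hh, hl, _⟩ := path_concat hp1 hp2 hh1 hl1 hh2 hl2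
  exact ⟨w, ⟨hp, hp.nodup' hacyc⟩, hh, hl⟩

lemma hasPath_antisymm (hacyc : N.Acyclic) {a b : α}
    (h1 : N.HasAcyclicPath a b) (h2 : N.HasAcyclicPath b a) : a = b := by
  by_contra hne
  obtain ⟨w1, ⟨hp1, _⟩, hh1, hl1⟩ := h1
  obtain ⟨w2, ⟨hp2, _⟩, hh2, hl2⟩ := h2
  obtain ⟨w, hp, hh, hl, hlen⟩ := path_concat hp1 hp2 hh1 hl1 hh2 hl2
  have l1 : 2 ≤ w1.length := pn_two_le_length hh1 hl1 hne
  have l2 : 2 ≤ w2.length := pn_two_le_length hh2 hl2 (Ne.symm hne)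
  exact hacyc a ⟨w, hp, by omega, hh, hl⟩

open Classical in
/-- Measure: the number of nodes reachable from `p` by an acyclic path. -/
noncomputable def dmeas (N : PetriNet α) (p : α) : ℕ :=
  (N.nodes.filter (fun z => N.HasAcyclicPath p z)).card

lemma dmeas_lt (hacyc : N.Acyclic) {p b : α} (hp : p ∈ N.nodes)
    (h : N.HasAcyclicPath p b) (hne : p ≠ b) : N.dmeas b < N.dmeas p := by
  classical
  unfold dmeas
  have hsub : N.nodes.filter (fun z => N.HasAcyclicPath b z) ⊆
      N.nodes.filter (fun z => N.HasAcyclicPath p z) := by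
    intro z hz
    rw [Finset.mem_filter] at hz ⊢
    exact ⟨hz.1, hasPath_trans hacyc h hz.2⟩
  have hmem : p ∈ N.nodes.filter (fun z => N.HasAcyclicPath p z) :=
    Finset.mem_filter.mpr ⟨hp, hasPath_refl hp⟩
  have hnot : p ∉ N.nodes.filter (fun z => N.HasAcyclicPath b z) := by
    intro hc
    exact hne (hasPath_antisymm hacyc h (Finset.mem_filter.mp hc).2)
  exact Finset.card_lt_card ((Finset.ssubset_iff_of_subset hsub).mpr ⟨p, hmem, hnot⟩)

lemma step_val {M M' : α → ℕ} {t : α} (h : N.Step M t M') (z : α) :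
    M' z = M z - (if z ∈ N.preset t then 1 else 0) + (if z ∈ N.postset t then 1 else 0) := by
  rw [h.2]; rfl

end PetriNet

end Aux
section Aux2

variable {α : Type} [DecidableEq α]

open PetriNet

namespace WorkflowNet

variable {W : WorkflowNet α}

lemma mem_nodes_of_places {x : α} (h : x ∈ W.places) : x ∈ W.toPetriNet.nodes :=
  Finset.mem_union_left _ h

lemma mem_nodes_of_trans {x : α} (h : x ∈ W.transitions) : x ∈ W.toPetriNet.nodes :=
  Finset.mem_union_right _ h

lemma preset_nonempty {x : α} (hx : x ∈ W.toPetriNet.nodes) (hne : x ≠ W.source) :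
    ∃ z, z ∈ W.toPetriNet.preset x := by
  obtain ⟨w, hw, hh, _, hm⟩ := W.all_on_path x hx
  obtain ⟨s, rfl⟩ := pn_head_eq hh
  have hx' : x ∈ s := by
    rcases List.mem_cons.mp hm with rfl | h'
    · exact absurd rfl hne
    · exact h'
  obtain ⟨z, hz⟩ := pn_pred_of_chain s W.source hw.2.2 hx'
  exact ⟨z, mem_preset' hz⟩

lemma postset_nonempty {x : α} (hx : x ∈ W.toPetriNet.nodes) (hne : x ≠ W.sink) :
    ∃ z, z ∈ W.toPetriNet.postset x := by
  obtain ⟨w, hw, _, hl, hm⟩ := W.all_on_path x hx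
  obtain ⟨z, hz⟩ := pn_succ_of_chain w hw.2.2 hl hm hne
  exact ⟨z, mem_postset' hz⟩

lemma eq_terminal (hsound : W.Sound) {M : α → ℕ}
    (hM : W.toPetriNet.Reachable W.initialMarking M) (h : 1 ≤ M W.sink) :
    M = W.terminalMarking :=
  (hsound.1 M hM).2 h

lemma first_consume (W : WorkflowNet α) :
    ∀ M, Relation.ReflTransGen (fun M M' => ∃ t, W.toPetriNet.Step M t M')
        M W.terminalMarking →
      ∀ f : α → ℕ, (∀ z, f z ≤ M z) → (∃ z, 1 ≤ f z ∧ z ≠ W.sink) →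
      ∃ Ma u Mb, W.toPetriNet.Reachable M Ma ∧ (∀ z, f z ≤ Ma z) ∧
        W.toPetriNet.Step Ma u Mb ∧ ∃ z, 1 ≤ f z ∧ z ∈ W.toPetriNet.preset u := by
  intro M h
  induction h using Relation.ReflTransGen.head_induction_on with
  | refl =>
    rintro f hf ⟨z, hz1, hz2⟩
    have h2 := hf z
    simp [WorkflowNet.terminalMarking, hz2] at h2
    omega
  | head hstep htail ih =>
    rename_i M₁ M₂
    intro f hf hex
    obtain ⟨u, hstep'⟩ := hstep
    by_cases hc : ∃ z, 1 ≤ f z ∧ z ∈ W.toPetriNet.preset u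
    · exact ⟨M₁, u, M₂, Relation.ReflTransGen.refl, hf, hstep', hc⟩
    · push_neg at hc
      have hf2 : ∀ z, f z ≤ M₂ z := by
        intro z
        by_cases hz : 1 ≤ f z
        · have hnp := hc z hz
          have hv := step_val hstep' z
          have hfz := hf z
          rw [hv]
          simp only [hnp, if_false]
          split_ifs <;> omega
        · omega
      obtain ⟨Ma, u', Mb, h1, h2, h3, h4⟩ := ih f hf2 hex
      exact ⟨Ma, u', Mb, Relation.ReflTransGen.head ⟨u, hstep'⟩ h1, h2, h3, h4⟩

end WorkflowNet

end Aux2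
section Aux3

variable {α : Type} [DecidableEq α]

open PetriNet WorkflowNet

/-- Main semantic lemma (joint strong induction):
(a) no reachable marking marks two distinct places connected by a path;
(b) no reachable marking puts two tokens on one place. -/
lemma wn_main_aux (W : WorkflowNet α) (hfc : W.toPetriNet.FreeChoice)
    (hacyc : W.toPetriNet.Acyclic) (hsound : W.Sound) :
    ∀ n : ℕ, ∀ M, W.toPetriNet.Reachable W.initialMarking M →
      (∀ p q w, p ∈ W.places → q ∈ W.places → p ≠ q → 1 ≤ M p → 1 ≤ M q →
        W.toPetriNet.IsPath w → w.head? = some p → w.getLast? = some q →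
        W.toPetriNet.dmeas p + W.toPetriNet.dmeas q ≤ n → False) ∧
      (∀ q, q ∈ W.places → 2 ≤ M q → 2 * W.toPetriNet.dmeas q ≤ n → False) := by
  intro n
  induction n using Nat.strong_induction_on with
  | _ n IH =>
  intro M hM
  constructor
  · -- part (a)
    intro p q w hp hq hpq hMp hMq hw hwh hwl hbound
    -- decompose the path as  p :: t₀ :: a₁ :: w3
    obtain ⟨w1, rfl⟩ := pn_head_eq hwh
    have hw1ne : w1 ≠ [] := by
      rintro rfl
      simp at hwl
      exact hpq hwl
    obtain ⟨t₀, w2, rfl⟩ : ∃ t₀ w2, w1 = t₀ :: w2 := by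
      cases w1 with
      | nil => exact absurd rfl hw1ne
      | cons a b => exact ⟨a, b, rfl⟩
    have hpt₀ : (p, t₀) ∈ W.toPetriNet.flow := (List.isChain_cons_cons.mp hw.2.2).1
    have ht₀T : t₀ ∈ W.transitions := snd_trans hpt₀ hp
    have hw2ne : w2 ≠ [] := by
      rintro rfl
      simp [List.getLast?_cons_cons] at hwl
      exact not_place_and_trans hq (hwl ▸ ht₀T)
    obtain ⟨a₁, w3, rfl⟩ : ∃ a₁ w3, w2 = a₁ :: w3 := by
      cases w2 with
      | nil => exact absurd rfl hw2ne
      | cons a b => exact ⟨a, b, rfl⟩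
    have ht₀a : (t₀, a₁) ∈ W.toPetriNet.flow :=
      (List.isChain_cons_cons.mp (List.isChain_cons_cons.mp hw.2.2).2).1
    have ha₁P : a₁ ∈ W.places := snd_place ht₀a ht₀T
    have hwl' : (a₁ :: w3).getLast? = some q := by
      simpa [List.getLast?_cons_cons] using hwl
    have hpathA : W.toPetriNet.IsPath (a₁ :: w3) :=
      ⟨by simp, fun x hx => hw.2.1 x (List.mem_cons_of_mem _ (List.mem_cons_of_mem _ hx)),
        (List.isChain_cons_cons.mp (List.isChain_cons_cons.mp hw.2.2).2).2⟩
    have hpn : p ∈ W.toPetriNet.nodes := mem_nodes_of_places hp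
    have hqn : q ∈ W.toPetriNet.nodes := mem_nodes_of_places hq
    have hPpa : W.toPetriNet.IsPath [p, t₀, a₁] := by
      refine ⟨by simp, ?_, ?_⟩
      · intro x hx
        simp at hx
        rcases hx with rfl | rfl | rfl
        · exact hpn
        · exact mem_nodes_of_trans ht₀T
        · exact mem_nodes_of_places ha₁P
      · exact List.isChain_cons_cons.mpr ⟨hpt₀, List.isChain_cons_cons.mpr ⟨ht₀a, List.isChain_singleton _⟩⟩
    have hpa₁ne : p ≠ a₁ := by
      rintro rfl
      exact hacyc p ⟨[p, t₀, p], hPpa, by simp, rfl, by simp⟩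
    have hpa₁ : W.toPetriNet.HasAcyclicPath p a₁ :=
      ⟨[p, t₀, a₁], ⟨hPpa, hPpa.nodup' hacyc⟩, rfl, by simp⟩
    have hda₁ : W.toPetriNet.dmeas a₁ < W.toPetriNet.dmeas p :=
      dmeas_lt hacyc hpn hpa₁ hpa₁ne
    have hdq : W.toPetriNet.dmeas q < W.toPetriNet.dmeas p :=
      dmeas_lt hacyc hpn ⟨_, ⟨hw, hw.nodup' hacyc⟩, rfl, hwl⟩ hpq
    -- key firing step: if t₀ can fire while q stays marked, recurse
    have key : ∀ M', W.toPetriNet.Reachable W.initialMarking M' →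
        W.toPetriNet.Enabled M' t₀ → 1 ≤ M' q → q ∉ W.toPetriNet.preset t₀ → False := by
      intro M' hM' hen hM'q hqpre
      have hstep : W.toPetriNet.Step M' t₀ (W.toPetriNet.fire M' t₀) := ⟨hen, rfl⟩
      have hM₂r : W.toPetriNet.Reachable W.initialMarking (W.toPetriNet.fire M' t₀) :=
        hM'.tail ⟨t₀, hstep⟩
      have ha₁post : a₁ ∈ W.toPetriNet.postset t₀ := mem_postset' ht₀a
      have hM₂a : 1 ≤ W.toPetriNet.fire M' t₀ a₁ := by
        have := step_val hstep a₁
        rw [this]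
        simp [ha₁post]
      by_cases haq : a₁ = q
      · subst haq
        have h2 : 2 ≤ W.toPetriNet.fire M' t₀ a₁ := by
          have := step_val hstep a₁
          rw [this]
          simp [ha₁post, hqpre]
          omega
        exact (IH (2 * W.toPetriNet.dmeas a₁) (by omega) _ hM₂r).2 a₁ ha₁P h2 le_rfl
      · have hM₂q : 1 ≤ W.toPetriNet.fire M' t₀ q := by
          have := step_val hstep q
          rw [this]
          simp [hqpre]
          split_ifs <;> omega
        exact (IH (W.toPetriNet.dmeas a₁ + W.toPetriNet.dmeas q) (by omega) _ hM₂r).1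
          a₁ q (a₁ :: w3) ha₁P hq haq hM₂a hM₂q hpathA rfl hwl' le_rfl
    have ht₀post : t₀ ∈ W.toPetriNet.postset p := mem_postset' hpt₀
    by_cases hcard : 1 < (W.toPetriNet.postset p).card
    · -- free choice: t₀ is enabled right now
      have hpre : W.toPetriNet.preset t₀ = {p} := hfc p hp hcard t₀ ht₀post
      have hen : W.toPetriNet.Enabled M t₀ := by
        refine ⟨ht₀T, ?_⟩
        intro z hz
        rw [hpre, Finset.mem_singleton] at hz
        subst hz
        exact hMp
      refine key M hM hen hMq ?_
      rw [hpre, Finset.mem_singleton]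
      exact fun h => hpq h.symm
    · -- p has a unique output transition t₀
      have huniq : ∀ u, u ∈ W.toPetriNet.postset p → u = t₀ := by
        intro u hu
        exact Finset.card_le_one.mp (by omega) u hu t₀ ht₀post
      have hps : p ≠ W.sink := by
        intro hps0
        have hT := eq_terminal hsound hM (hps0 ▸ hMp)
        rw [hT] at hMq
        unfold WorkflowNet.terminalMarking at hMq
        rw [if_neg (fun h : q = W.sink => hpq (hps0.trans h.symm))] at hMq
        omega
      have hqs : q ≠ W.sink := by
        intro hqs0
        have hT := eq_terminal hsound hM (hqs0 ▸ hMq)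
        rw [hT] at hMp
        unfold WorkflowNet.terminalMarking at hMp
        rw [if_neg (fun h : p = W.sink => hpq (h.trans hqs0.symm))] at hMp
        omega
      obtain ⟨Ma, u, Mb, hMMa, hkeep, hstep, z, hz1, hzpre⟩ :=
        first_consume W M ((hsound.1 M hM).1) (fun z => if z = p ∨ z = q then 1 else 0)
          (by
            intro z
            by_cases h1 : z = p
            · subst h1; simpa using hMp
            · by_cases h2 : z = q
              · subst h2; simpa using hMq
              · simp [h1, h2])
          ⟨p, by simp, hps⟩
      have hMar : W.toPetriNet.Reachable W.initialMarking Ma := hM.trans hMMa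
      have hMap : 1 ≤ Ma p := by simpa using hkeep p
      have hMaq : 1 ≤ Ma q := by
        have := hkeep q
        simpa using this
      have hzpq : z = p ∨ z = q := by
        by_contra hcon
        push_neg at hcon
        simp [hcon.1, hcon.2] at hz1
      have hqt₀ : q ∉ W.toPetriNet.preset t₀ := by
        intro hcont
        have hqt : (q, t₀) ∈ W.toPetriNet.flow := flow_of_mem_preset hcont
        apply hacyc t₀
        refine ⟨(t₀ :: a₁ :: w3) ++ [t₀], ⟨by simp, ?_, ?_⟩, by simp, ?_, List.getLast?_concat⟩
        · intro x hx
          rcases List.mem_append.mp hx with hx' | hx'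
          · exact hw.2.1 x (List.mem_cons_of_mem _ hx')
          · simp at hx'
            subst hx'
            exact mem_nodes_of_trans ht₀T
        · refine List.IsChain.append (List.isChain_cons_cons.mp hw.2.2).2 (List.isChain_singleton _) ?_
          intro x hx y hy
          rw [show (t₀ :: a₁ :: w3).getLast? = some q by
            simpa [List.getLast?_cons_cons] using hwl] at hx
          simp at hx hy
          rw [← hx, ← hy]
          exact hqt
        · rw [pn_head_append _ _ (by simp)]
          rfl
      by_cases hu : u = t₀
      · subst hu
        exact key Ma hMar hstep.1 hMaq hqt₀
      · -- u consumes q; extend the path beyond q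
        have hzq : z = q := by
          rcases hzpq with rfl | rfl
          · exact absurd (huniq u (mem_postset' (flow_of_mem_preset hzpre))) hu
          · rfl
        subst hzq
        have hqu : (z, u) ∈ W.toPetriNet.flow := flow_of_mem_preset hzpre
        have huT : u ∈ W.transitions := hstep.1.1
        have hus : u ≠ W.sink := by
          rintro rfl
          exact not_place_and_trans W.sink_mem huT
        obtain ⟨b, hb⟩ := postset_nonempty (mem_nodes_of_trans huT) hus
        have hub : (u, b) ∈ W.toPetriNet.flow := flow_of_mem_postset hb
        have hbP : b ∈ W.places := snd_place hub huT
        have hMbb : 1 ≤ Mb b := by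
          rw [step_val hstep b]
          simp [hb]
        have hppre : p ∉ W.toPetriNet.preset u := fun hcont =>
          hu (huniq u (mem_postset' (flow_of_mem_preset hcont)))
        have hMbp : 1 ≤ Mb p := by
          rw [step_val hstep p]
          simp [hppre]
          split_ifs <;> omega
        have hMbr : W.toPetriNet.Reachable W.initialMarking Mb := hMar.tail ⟨u, hstep⟩
        have hPqub : W.toPetriNet.IsPath [z, u, b] := by
          refine ⟨by simp, ?_, List.isChain_cons_cons.mpr ⟨hqu, List.isChain_cons_cons.mpr ⟨hub, List.isChain_singleton _⟩⟩⟩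
          intro x hx
          simp at hx
          rcases hx with rfl | rfl | rfl
          · exact hqn
          · exact mem_nodes_of_trans huT
          · exact mem_nodes_of_places hbP
        have hbq : z ≠ b := by
          rintro rfl
          exact hacyc z ⟨[z, u, z], hPqub, by simp, rfl, by simp⟩
        have hwb : W.toPetriNet.IsPath ((p :: t₀ :: a₁ :: w3) ++ [u, b]) := by
          refine ⟨by simp, ?_, ?_⟩
          · intro x hx
            rcases List.mem_append.mp hx with hx' | hx'
            · exact hw.2.1 x hx'
            · simp at hx'
              rcases hx' with rfl | rfl
              · exact mem_nodes_of_trans huT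
              · exact mem_nodes_of_places hbP
          · refine List.IsChain.append hw.2.2 (by simp [List.isChain_cons_cons, hub]) ?_
            intro x hx y hy
            rw [hwl] at hx
            simp at hx hy
            rw [← hx, ← hy]
            exact hqu
        have hbnep : p ≠ b := by
          have hnd := hwb.nodup' hacyc
          simp only [List.cons_append, List.nodup_cons] at hnd
          intro hcont
          exact hnd.1 (by rw [hcont]; simp)
        have hdb : W.toPetriNet.dmeas b < W.toPetriNet.dmeas z :=
          dmeas_lt hacyc hqn ⟨[z, u, b], ⟨hPqub, hPqub.nodup' hacyc⟩, rfl, by simp⟩ hbq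
        have hlastb : ((p :: t₀ :: a₁ :: w3) ++ [u, b]).getLast? = some b := by
          rw [pn_last_append _ _ (by simp)]
          rfl
        exact (IH (W.toPetriNet.dmeas p + W.toPetriNet.dmeas b) (by omega) Mb hMbr).1
          p b _ hp hbP hbnep hMbp hMbb hwb (by rw [pn_head_append _ _ (by simp)]; rfl) hlastb le_rfl
  · -- part (b)
    intro q hq hMq hbound
    have hqn : q ∈ W.toPetriNet.nodes := mem_nodes_of_places hq
    have hqs : q ≠ W.sink := by
      intro h0
      have hT := eq_terminal hsound hM (by rw [← h0]; omega)
      rw [hT] at hMq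
      unfold WorkflowNet.terminalMarking at hMq
      rw [if_pos h0] at hMq
      omega
    obtain ⟨Ma, u, Mb, hMMa, hkeep, hstep, z, hz1, hzpre⟩ :=
      first_consume W M ((hsound.1 M hM).1) (fun z => if z = q then 2 else 0)
        (by
          intro z
          by_cases h1 : z = q
          · subst h1; simpa using hMq
          · simp [h1])
        ⟨q, by simp, hqs⟩
    have hzq : z = q := by
      by_contra hcon
      simp [hcon] at hz1
    subst hzq
    have hMar : W.toPetriNet.Reachable W.initialMarking Ma := hM.trans hMMa
    have hMaq : 2 ≤ Ma z := by simpa using hkeep z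
    have hqu : (z, u) ∈ W.toPetriNet.flow := flow_of_mem_preset hzpre
    have huT : u ∈ W.transitions := hstep.1.1
    have hus : u ≠ W.sink := by
      rintro rfl
      exact not_place_and_trans W.sink_mem huT
    obtain ⟨b, hb⟩ := postset_nonempty (mem_nodes_of_trans huT) hus
    have hub : (u, b) ∈ W.toPetriNet.flow := flow_of_mem_postset hb
    have hbP : b ∈ W.places := snd_place hub huT
    have hPqub : W.toPetriNet.IsPath [z, u, b] := by
      refine ⟨by simp, ?_, List.isChain_cons_cons.mpr ⟨hqu, List.isChain_cons_cons.mpr ⟨hub, List.isChain_singleton _⟩⟩⟩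
      intro x hx
      simp at hx
      rcases hx with rfl | rfl | rfl
      · exact hqn
      · exact mem_nodes_of_trans huT
      · exact mem_nodes_of_places hbP
    have hbq : z ≠ b := by
      rintro rfl
      exact hacyc z ⟨[z, u, z], hPqub, by simp, rfl, by simp⟩
    have hMbq : 1 ≤ Mb z := by
      rw [step_val hstep z]
      simp [hzpre]
      split_ifs <;> omega
    have hMbb : 1 ≤ Mb b := by
      rw [step_val hstep b]
      simp [hb]
    have hMbr : W.toPetriNet.Reachable W.initialMarking Mb := hMar.tail ⟨u, hstep⟩
    have hdb : W.toPetriNet.dmeas b < W.toPetriNet.dmeas z :=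
      dmeas_lt hacyc hqn ⟨[z, u, b], ⟨hPqub, hPqub.nodup' hacyc⟩, rfl, by simp⟩ hbq
    exact (IH (W.toPetriNet.dmeas z + W.toPetriNet.dmeas b) (by omega) Mb hMbr).1
      z b [z, u, b] hq hbP hbq hMbq hMbb hPqub rfl (by simp) le_rfl

/-- Usable form of Lemma A. -/
lemma wn_no_marked_path (W : WorkflowNet α) (hfc : W.toPetriNet.FreeChoice)
    (hacyc : W.toPetriNet.Acyclic) (hsound : W.Sound) {M : α → ℕ} {p q : α}
    (hM : W.toPetriNet.Reachable W.initialMarking M) (hp : p ∈ W.places) (hq : q ∈ W.places)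
    (hpq : p ≠ q) (hMp : 1 ≤ M p) (hMq : 1 ≤ M q)
    (hpath : W.toPetriNet.HasAcyclicPath p q) : False := by
  obtain ⟨w, ⟨hw, _⟩, hh, hl⟩ := hpath
  exact (wn_main_aux W hfc hacyc hsound (W.toPetriNet.dmeas p + W.toPetriNet.dmeas q) M hM).1
    p q w hp hq hpq hMp hMq hw hh hl le_rfl

end Aux3
section Aux4

variable {α : Type} [DecidableEq α]

open PetriNet WorkflowNet

lemma pn_concStep_mono (N : PetriNet α) (M₀ : α → ℕ) {R S : Set (α × α)} (h : R ⊆ S) :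
    N.concStep M₀ R ⊆ N.concStep M₀ S := by
  rintro ⟨a, b⟩ ⟨h1, h2, h3, h4, h5⟩
  exact ⟨h1, h2, fun ha hb z hz => h (h3 ha hb z hz), fun ha hb z hz => h (h4 ha hb z hz),
    fun ha hb z hz z' hz' => h (h5 ha hb z hz z' hz')⟩

lemma pn_concurrent_postfixed (N : PetriNet α) (M₀ : α → ℕ) :
    N.Concurrent M₀ ⊆ N.concStep M₀ (N.Concurrent M₀) := by
  rintro q hq
  obtain ⟨R, hR, hqR⟩ := hq
  exact pn_concStep_mono N M₀ (fun x hx => Set.subset_sUnion_of_mem hR hx) (hR hqR)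

lemma pn_concurrent_symm (N : PetriNet α) (M₀ : α → ℕ) {x y : α}
    (h : (x, y) ∈ N.Concurrent M₀) : (y, x) ∈ N.Concurrent M₀ := by
  set C := N.Concurrent M₀ with hC
  set S : Set (α × α) := C ∪ {q | (q.2, q.1) ∈ C} with hS
  have hpost : S ⊆ N.concStep M₀ S := by
    rintro ⟨a, b⟩ hab
    rcases hab with hab | hab
    · exact pn_concStep_mono N M₀ Set.subset_union_left (pn_concurrent_postfixed N M₀ hab)
    · have hba := pn_concurrent_postfixed N M₀ hab
      obtain ⟨h1, ⟨M, hM, hact1, hact2⟩, c1, c2, c3⟩ := hba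
      refine ⟨Ne.symm h1, ⟨M, hM, hact2, hact1⟩, ?_, ?_, ?_⟩
      · intro ha hb z hz
        exact Or.inl (c2 hb ha z hz)
      · intro ha hb z hz
        exact Or.inl (c1 hb ha z hz)
      · intro ha hb z hz z' hz'
        exact Or.inr (c3 hb ha z' hz' z hz)
  exact ⟨S, hpost, Or.inr h⟩

lemma wn_active_place {N : PetriNet α} {M : α → ℕ} {x : α} (h : N.Active x M)
    (hx : x ∈ N.places) : 1 ≤ M x := by
  rcases h with ⟨_, h2⟩ | ⟨h1, _⟩
  · exact h2
  · exact absurd (not_place_and_trans hx h1) not_false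

/-- Core direction: a concurrent pair admits no acyclic path from first to second. -/
lemma wn_no_path_of_concurrent (W : WorkflowNet α) (hfc : W.toPetriNet.FreeChoice)
    (hacyc : W.toPetriNet.Acyclic) (hsound : W.Sound) {a b : α}
    (hab : (a, b) ∈ W.toPetriNet.Concurrent W.initialMarking) :
    ¬ W.toPetriNet.HasAcyclicPath a b := by
  intro hpath
  obtain ⟨hne, ⟨M, hM, hA, hB⟩, c1, c2, c3⟩ :=
    pn_concurrent_postfixed W.toPetriNet W.initialMarking hab
  simp only at hne c1 c2 c3
  obtain ⟨w, ⟨hw, hnd⟩, hh, hl⟩ := hpath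
  -- helper: a concurrent pair of places joined by a path (in pair order) is impossible
  have finish : ∀ u v, u ∈ W.places → v ∈ W.places →
      (u, v) ∈ W.toPetriNet.Concurrent W.initialMarking →
      W.toPetriNet.HasAcyclicPath u v → False := by
    intro u v hu hv huv hp
    obtain ⟨hne', ⟨M', hM', hA', hB'⟩, _, _, _⟩ :=
      pn_concurrent_postfixed W.toPetriNet W.initialMarking huv
    simp only at hne'
    exact wn_no_marked_path W hfc hacyc hsound hM' hu hv hne'
      (wn_active_place hA' hu) (wn_active_place hB' hv) hp
  rcases hA with ⟨haP, hMa⟩ | ⟨haT, henA⟩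
  · rcases hB with ⟨hbP, hMb⟩ | ⟨hbT, henB⟩
    · -- both places
      exact wn_no_marked_path W hfc hacyc hsound hM haP hbP hne hMa hMb
        ⟨w, ⟨hw, hnd⟩, hh, hl⟩
    · -- a place, b transition: use the predecessor v of b on the path
      obtain ⟨w₀, rfl⟩ := pn_last_eq hl
      have hw₀ne : w₀ ≠ [] := by
        rintro rfl
        simp at hh
        exact hne hh.symm
      obtain ⟨v, hv⟩ : ∃ v, w₀.getLast? = some v := by
        cases hx : w₀.getLast? with
        | none => exact absurd (List.getLast?_eq_none_iff.mp hx) hw₀ne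
        | some v => exact ⟨v, rfl⟩
      have hvb : (v, b) ∈ W.toPetriNet.flow := (List.isChain_append.mp hw.2.2).2.2 v hv b rfl
      have hvpre : v ∈ W.toPetriNet.preset b := mem_preset' hvb
      have hCva := c2 haP hbT v hvpre
      by_cases hva : v = a
      · subst hva
        exact (pn_concurrent_postfixed W.toPetriNet W.initialMarking hCva).1 rfl
      · have hvP : v ∈ W.places := fst_place hvb hbT
        have hw₀path : W.toPetriNet.IsPath w₀ :=
          ⟨hw₀ne, fun x hx => hw.2.1 x (List.mem_append_left _ hx),
            (List.isChain_append.mp hw.2.2).1⟩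
        have hh₀ : w₀.head? = some a := by
          rw [← pn_head_append w₀ [b] hw₀ne]
          exact hh
        exact finish a v haP hvP (pn_concurrent_symm _ _ hCva)
          ⟨w₀, ⟨hw₀path, hw₀path.nodup' hacyc⟩, hh₀, hv⟩
  · -- a transition: use any input place z of a
    have hasrc : a ≠ W.source := by
      intro h0
      exact not_place_and_trans (by rw [h0]; exact W.source_mem) haT
    obtain ⟨z, hz⟩ := preset_nonempty (mem_nodes_of_trans haT) hasrc
    have hza : (z, a) ∈ W.toPetriNet.flow := flow_of_mem_preset hz
    have hzP : z ∈ W.places := fst_place hza haT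
    have hzn : z ∈ W.toPetriNet.nodes := mem_nodes_of_places hzP
    rcases hB with ⟨hbP, hMb⟩ | ⟨hbT, henB⟩
    · -- b place
      have hCzb := c1 haT hbP z hz
      by_cases hzb : z = b
      · subst hzb
        exact (pn_concurrent_postfixed W.toPetriNet W.initialMarking hCzb).1 rfl
      · obtain ⟨w', rfl⟩ := pn_head_eq hh
        have hzw : W.toPetriNet.IsPath (z :: a :: w') := by
          refine ⟨by simp, ?_, List.isChain_cons_cons.mpr ⟨hza, hw.2.2⟩⟩
          intro x hx
          rcases List.mem_cons.mp hx with rfl | hx'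
          · exact hzn
          · exact hw.2.1 x hx'
        exact finish z b hzP hbP hCzb
          ⟨z :: a :: w', ⟨hzw, hzw.nodup' hacyc⟩, rfl, by
            rw [List.getLast?_cons_cons]; exact hl⟩
    · -- both transitions
      obtain ⟨w₀, rfl⟩ := pn_last_eq hl
      have hw₀ne : w₀ ≠ [] := by
        rintro rfl
        simp at hh
        exact hne hh.symm
      obtain ⟨v, hv⟩ : ∃ v, w₀.getLast? = some v := by
        cases hx : w₀.getLast? with
        | none => exact absurd (List.getLast?_eq_none_iff.mp hx) hw₀ne
        | some v => exact ⟨v, rfl⟩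
      have hvb : (v, b) ∈ W.toPetriNet.flow := (List.isChain_append.mp hw.2.2).2.2 v hv b rfl
      have hvpre : v ∈ W.toPetriNet.preset b := mem_preset' hvb
      have hvP : v ∈ W.places := fst_place hvb hbT
      have hCzv := c3 haT hbT z hz v hvpre
      by_cases hzv : z = v
      · subst hzv
        exact (pn_concurrent_postfixed W.toPetriNet W.initialMarking hCzv).1 rfl
      · have hh₀ : w₀.head? = some a := by
          rw [← pn_head_append w₀ [b] hw₀ne]
          exact hh
        obtain ⟨w₀', rfl⟩ := pn_head_eq hh₀
        have hzw : W.toPetriNet.IsPath (z :: a :: w₀') := by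
          refine ⟨by simp, ?_, List.isChain_cons_cons.mpr ⟨hza, (List.isChain_append.mp hw.2.2).1⟩⟩
          intro x hx
          rcases List.mem_cons.mp hx with rfl | hx'
          · exact hzn
          · exact hw.2.1 x (List.mem_append_left _ hx')
        exact finish z v hzP hvP hCzv
          ⟨z :: a :: w₀', ⟨hzw, hzw.nodup' hacyc⟩, rfl, by
            rw [show z :: a :: w₀' = [z] ++ (a :: w₀') by rfl,
              pn_last_append [z] _ (by simp)]
            exact hv⟩

end Aux4
/-- In a sound acyclic free-choice workflow net, if two distinct nodes are concurrent,
then there is no acyclic path from either one to the other. -/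
theorem concurrent_implies_no_path {α : Type} [DecidableEq α] (W : WorkflowNet α)
    (hfc : W.toPetriNet.FreeChoice) (hacyc : W.toPetriNet.Acyclic) (hsound : W.Sound) :
    ∀ x ∈ W.toPetriNet.nodes, ∀ y ∈ W.toPetriNet.nodes, x ≠ y →
      (x, y) ∈ W.toPetriNet.Concurrent W.initialMarking →
      ¬ W.toPetriNet.HasAcyclicPath x y ∧ ¬ W.toPetriNet.HasAcyclicPath y x := by
  intro x _ y _ _ hC
  exact ⟨wn_no_path_of_concurrent W hfc hacyc hsound hC,
    wn_no_path_of_concurrent W hfc hacyc hsound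
      (pn_concurrent_symm W.toPetriNet W.initialMarking hC)⟩
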